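/- Let h(m, n, r) = L_{m−1}^{(2ν)}(2aβr)·L_{n−1}^{(2ν)}(2aβr). Then m·h(m+1, n, r) + n·h(m, n+1, r) − r·(∂/∂r)h(m, n, r) + (4aβr − m − 4ν − n)·h(m, n, r) = 0 for all m, n ≥ 1 and all real r. -/

import Mathlib

noncomputable def laguerreL (n : ℕ) (a x : ℝ) : ℝ :=
  ∑ k ∈ Finset.range (n + 1), (-1 : ℝ) ^ k *
    ((∏ i ∈ Finset.range (n - k), ((n : ℝ) + a - i)) / (Nat.factorial (n - k))) *
    x ^ k / (Nat.factorial k)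

noncomputable def lagC (n k : ℕ) (lam : ℝ) : ℝ :=
  (-1 : ℝ) ^ k * ((∏ i ∈ Finset.range (n - k), ((n : ℝ) + lam - i)) / (Nat.factorial (n - k))) /
    (Nat.factorial k)

lemma laguerreL_eq (n : ℕ) (lam x : ℝ) :
    laguerreL n lam x = ∑ k ∈ Finset.range (n + 1), lagC n k lam * x ^ k := by
  unfold laguerreL lagC
  exact Finset.sum_congr rfl fun k _ => by ring

lemma hasDerivAt_laguerreL (n : ℕ) (lam x : ℝ) :
    HasDerivAt (fun y => laguerreL n lam y)
      (∑ k ∈ Finset.range (n + 1), lagC n k lam * ((k : ℝ) * x ^ (k - 1))) x := by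
  simp only [laguerreL_eq]
  exact HasDerivAt.fun_sum fun k _ => (hasDerivAt_pow k x).const_mul (lagC n k lam)

lemma lagC_top (lam : ℝ) (j : ℕ) :
    ((j : ℝ) + 1) * lagC (j + 1) (j + 1) lam = - lagC j j lam := by
  simp only [lagC, Nat.sub_self, Finset.range_zero, Finset.prod_empty, Nat.factorial_zero,
    Nat.cast_one, pow_succ]
  have h1 : (Nat.factorial j : ℝ) ≠ 0 := Nat.cast_ne_zero.2 (Nat.factorial_ne_zero j)
  have h2 : ((j : ℝ) + 1) ≠ 0 := by positivity
  rw [Nat.factorial_succ]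
  push_cast
  field_simp

lemma keyCoeff (lam : ℝ) (j k : ℕ) (hk : k ≤ j) :
    ((j : ℝ) + 1) * lagC (j + 1) k lam =
      ((k : ℝ) + ((j : ℝ) + 1 + lam)) * lagC j k lam -
        (if k = 0 then 0 else lagC j (k - 1) lam) := by
  obtain ⟨d, rfl⟩ := Nat.exists_eq_add_of_le hk
  have hsub1 : k + d + 1 - k = d + 1 := by omega
  have hsub2 : k + d - k = d := by omega
  have hQ1 : (∏ i ∈ Finset.range (d + 1), ((k : ℝ) + d + 1 + lam - i)) =
      (∏ i ∈ Finset.range d, ((k : ℝ) + d + lam - i)) * ((k : ℝ) + d + 1 + lam) := by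
    rw [Finset.prod_range_succ']
    congr 1
    · exact Finset.prod_congr rfl fun i _ => by push_cast; ring
    · push_cast; ring
  have hfac : (Nat.factorial (d + 1) : ℝ) = ((d : ℝ) + 1) * Nat.factorial d := by
    rw [Nat.factorial_succ]; push_cast; ring
  have hdfac : (Nat.factorial d : ℝ) ≠ 0 := Nat.cast_ne_zero.2 (Nat.factorial_ne_zero d)
  cases k with
  | zero =>
    have hQ : (∏ i ∈ Finset.range (d + 1), (((d + 1 : ℕ) : ℝ) + lam - i)) =
        (∏ i ∈ Finset.range d, (((d : ℕ) : ℝ) + lam - i)) * ((d : ℝ) + 1 + lam) := by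
      rw [Finset.prod_range_succ']
      congr 1
      · exact Finset.prod_congr rfl fun i _ => by push_cast; ring
      · push_cast; ring
    have hd1 : ((d : ℝ) + 1) ≠ 0 := by positivity
    rw [if_pos rfl, sub_zero]
    simp only [lagC, Nat.zero_add, Nat.sub_zero, pow_zero, one_mul, Nat.factorial_zero,
      Nat.cast_one, div_one, Nat.cast_zero]
    rw [hQ, hfac]
    field_simp
    ring
  | succ k' =>
    simp only [lagC, if_neg (Nat.succ_ne_zero k'), Nat.succ_sub_one]
    rw [hsub1, hsub2, show k' + 1 + d - k' = d + 1 by omega]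
    have hQ2 : (∏ i ∈ Finset.range (d + 1), ((k' : ℝ) + 1 + d + lam - i)) =
        (∏ i ∈ Finset.range d, ((k' : ℝ) + 1 + d + lam - i)) * ((k' : ℝ) + 1 + lam) := by
      rw [Finset.prod_range_succ]
      congr 1
      ring
    have hkfac : (Nat.factorial (k' + 1) : ℝ) = ((k' : ℝ) + 1) * Nat.factorial k' := by
      rw [Nat.factorial_succ]; push_cast; ring
    have hk'fac : (Nat.factorial k' : ℝ) ≠ 0 := Nat.cast_ne_zero.2 (Nat.factorial_ne_zero k')
    have hQ1' : (∏ i ∈ Finset.range (d + 1), (((k' + 1 + d + 1 : ℕ) : ℝ) + lam - i)) =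
        (∏ i ∈ Finset.range d, (((k' + 1 + d : ℕ) : ℝ) + lam - i)) *
          ((k' : ℝ) + 1 + (d : ℝ) + 1 + lam) := by
      rw [Finset.prod_range_succ']
      congr 1
      · exact Finset.prod_congr rfl fun i _ => by push_cast; ring
      · push_cast; ring
    have hQ2' : (∏ i ∈ Finset.range (d + 1), (((k' + 1 + d : ℕ) : ℝ) + lam - i)) =
        (∏ i ∈ Finset.range d, (((k' + 1 + d : ℕ) : ℝ) + lam - i)) * ((k' : ℝ) + 1 + lam) := by
      rw [Finset.prod_range_succ]
      congr 1
      push_cast; ring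
    rw [hQ1', hQ2', hfac, hkfac]
    push_cast
    have hd1 : ((d : ℝ) + 1) ≠ 0 := by positivity
    have hk1 : ((k' : ℝ) + 1) ≠ 0 := by positivity
    field_simp
    ring

lemma key (lam x : ℝ) (j : ℕ) :
    x * (∑ k ∈ Finset.range (j + 1), lagC j k lam * ((k : ℝ) * x ^ (k - 1))) =
      ((j : ℝ) + 1) * laguerreL (j + 1) lam x -
        ((j : ℝ) + 1 + lam - x) * laguerreL j lam x := by
  simp only [laguerreL_eq]
  have h1 : x * (∑ k ∈ Finset.range (j + 1), lagC j k lam * ((k : ℝ) * x ^ (k - 1))) =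
      ∑ k ∈ Finset.range (j + 1), (k : ℝ) * lagC j k lam * x ^ k := by
    rw [Finset.mul_sum]
    refine Finset.sum_congr rfl fun k _ => ?_
    cases k with
    | zero => simp
    | succ k' => simp only [Nat.succ_sub_one]; push_cast; rw [pow_succ]; ring
  have h2 : ∑ k ∈ Finset.range (j + 1 + 1), lagC (j + 1) k lam * x ^ k =
      (∑ k ∈ Finset.range (j + 1), lagC (j + 1) k lam * x ^ k) +
        lagC (j + 1) (j + 1) lam * x ^ (j + 1) := Finset.sum_range_succ _ _
  have h3 : x * (∑ k ∈ Finset.range (j + 1), lagC j k lam * x ^ k) =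
      (∑ k ∈ Finset.range (j + 1), (if k = 0 then 0 else lagC j (k - 1) lam) * x ^ k) +
        lagC j j lam * x ^ (j + 1) := by
    rw [Finset.mul_sum]
    have e1 : ∀ k, x * (lagC j k lam * x ^ k) = lagC j k lam * x ^ (k + 1) := fun k => by
      rw [pow_succ]; ring
    simp only [e1]
    rw [Finset.sum_range_succ]
    congr 1
    rw [Finset.sum_range_succ']
    simp only [if_neg (Nat.succ_ne_zero _), Nat.succ_sub_one, if_pos rfl, zero_mul, add_zero]
    simp
  have h4 : ∑ k ∈ Finset.range (j + 1), ((j : ℝ) + 1) * (lagC (j + 1) k lam * x ^ k) =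
      ∑ k ∈ Finset.range (j + 1),
        (((k : ℝ) * lagC j k lam * x ^ k + ((j : ℝ) + 1 + lam) * (lagC j k lam * x ^ k)) -
          (if k = 0 then 0 else lagC j (k - 1) lam) * x ^ k) := by
    refine Finset.sum_congr rfl fun k hk => ?_
    have hkj : k ≤ j := Nat.lt_succ_iff.mp (Finset.mem_range.mp hk)
    have := keyCoeff lam j k hkj
    linear_combination x ^ k * this
  rw [h1, h2]
  have h4' : ((j : ℝ) + 1) * (∑ k ∈ Finset.range (j + 1), lagC (j + 1) k lam * x ^ k) =
      (∑ k ∈ Finset.range (j + 1), (k : ℝ) * lagC j k lam * x ^ k) +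
        ((j : ℝ) + 1 + lam) * (∑ k ∈ Finset.range (j + 1), lagC j k lam * x ^ k) -
        (∑ k ∈ Finset.range (j + 1), (if k = 0 then 0 else lagC j (k - 1) lam) * x ^ k) := by
    rw [Finset.mul_sum, h4, Finset.sum_sub_distrib, Finset.sum_add_distrib, Finset.mul_sum]
  have hA := lagC_top lam j
  linear_combination (-1 : ℝ) * h4' + (-1 : ℝ) * h3 + (- x ^ (j+1)) * hA

theorem laguerre_prod_mixed (a β ν : ℝ) (m n : ℕ) (hm : 1 ≤ m) (hn : 1 ≤ n) (r : ℝ) :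
    (m : ℝ) * (laguerreL m (2 * ν) (2 * a * β * r) * laguerreL (n - 1) (2 * ν) (2 * a * β * r)) +
      (n : ℝ) * (laguerreL (m - 1) (2 * ν) (2 * a * β * r) * laguerreL n (2 * ν) (2 * a * β * r)) -
      r * deriv (fun s => laguerreL (m - 1) (2 * ν) (2 * a * β * s) *
        laguerreL (n - 1) (2 * ν) (2 * a * β * s)) r +
      (4 * a * β * r - (m : ℝ) - 4 * ν - (n : ℝ)) *
        (laguerreL (m - 1) (2 * ν) (2 * a * β * r) * laguerreL (n - 1) (2 * ν) (2 * a * β * r)) = 0 := by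
  obtain ⟨j, rfl⟩ := Nat.exists_eq_add_of_le hm
  obtain ⟨i, rfl⟩ := Nat.exists_eq_add_of_le hn
  set lam : ℝ := 2 * ν with hlam
  set x : ℝ := 2 * a * β * r with hx
  have hmj : 1 + j - 1 = j := by omega
  have hni : 1 + i - 1 = i := by omega
  rw [hmj, hni]
  have hinner : HasDerivAt (fun s : ℝ => 2 * a * β * s) (2 * a * β) r := by
    simpa using (hasDerivAt_id r).const_mul (2 * a * β)
  have hu : HasDerivAt (fun s => laguerreL j lam (2 * a * β * s))
      ((∑ k ∈ Finset.range (j + 1), lagC j k lam * ((k : ℝ) * x ^ (k - 1))) * (2 * a * β)) r :=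
    (hasDerivAt_laguerreL j lam x).comp r hinner
  have hv : HasDerivAt (fun s => laguerreL i lam (2 * a * β * s))
      ((∑ k ∈ Finset.range (i + 1), lagC i k lam * ((k : ℝ) * x ^ (k - 1))) * (2 * a * β)) r :=
    (hasDerivAt_laguerreL i lam x).comp r hinner
  have hD := (hu.fun_mul hv).deriv
  rw [hD]
  have hkeyu := key lam x j
  have hkeyv := key lam x i
  have hmcast : ((1 + j : ℕ) : ℝ) = (j : ℝ) + 1 := by push_cast; ring
  have hncast : ((1 + i : ℕ) : ℝ) = (i : ℝ) + 1 := by push_cast; ring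
  rw [show (1 + j) = j + 1 by ring, show (1 + i) = i + 1 by ring] at *
  push_cast
  have hxr : x = 2 * a * β * r := hx
  linear_combination (- laguerreL i lam x) * hkeyu + (- laguerreL j lam x) * hkeyv
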